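/- Let A be an n×n real matrix such that D(A) belongs to the class 𝒟, D(A) is strongly connected, and Δ_A ≠ 0. Then D(A^#) is a strongly connected simple symmetric digraph; in particular, A^# has zero diagonal and is combinatorially symmetric (its (i,j) entry is nonzero iff its (j,i) entry is nonzero). -/

import Mathlib

open Matrix

/-- Adjacency in a digraph given by relation `G`: a 2-cycle between distinct `i` and `j`. -/
def Adjd {n : ℕ} (G : Fin n → Fin n → Prop) (i j : Fin n) : Prop :=
  i ≠ j ∧ G i j ∧ G j i

/-- `G` is a simple symmetric digraph: no loops and edges come in both directions. -/
def IsSSD {n : ℕ} (G : Fin n → Fin n → Prop) : Prop :=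
  (∀ i, ¬ G i i) ∧ ∀ i j, G i j → G j i

/-- A vertex is pendant if it is incident to exactly one 2-cycle. -/
def Pendant {n : ℕ} (G : Fin n → Fin n → Prop) (i : Fin n) : Prop :=
  ∃! j, Adjd G i j

/-- The class 𝒟: simple symmetric digraphs in which every non-pendant vertex is
adjacent to at least one pendant vertex. -/
def InClassD {n : ℕ} (G : Fin n → Fin n → Prop) : Prop :=
  IsSSD G ∧ ∀ i, ¬ Pendant G i → ∃ j, Adjd G i j ∧ Pendant G j

/-- Strong connectivity: a directed path from every vertex to every other vertex. -/
def StronglyConnected {n : ℕ} (G : Fin n → Fin n → Prop) : Prop :=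
  ∀ i j : Fin n, Relation.ReflTransGen G i j

/-- An unordered pair `e` is a 2-cycle of `G`. -/
def IsEdge {n : ℕ} (G : Fin n → Fin n → Prop) (e : Sym2 (Fin n)) : Prop :=
  ∃ i j, e = s(i, j) ∧ Adjd G i j

/-- A matching: a set of pairwise vertex-disjoint 2-cycles. -/
def IsMatching {n : ℕ} (G : Fin n → Fin n → Prop) (M : Finset (Sym2 (Fin n))) : Prop :=
  (∀ e ∈ M, IsEdge G e) ∧
  ∀ e ∈ M, ∀ f ∈ M, e ≠ f → ∀ v : Fin n, v ∈ e → v ∉ f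

/-- A maximum matching: a matching of maximum cardinality. -/
def IsMaxMatching {n : ℕ} (G : Fin n → Fin n → Prop) (M : Finset (Sym2 (Fin n))) : Prop :=
  IsMatching G M ∧ ∀ M', IsMatching G M' → M'.card ≤ M.card

/-- A cycle chain, recorded by its list of (distinct) vertices `i₁, …, i_{m+1}`. -/
def IsCycleChain {n : ℕ} (G : Fin n → Fin n → Prop) (c : List (Fin n)) : Prop :=
  c.Nodup ∧ 2 ≤ c.length ∧ c.Chain' (Adjd G)

/-- A cycle chain from `i` to `j`. -/
def IsCycleChainBtw {n : ℕ} (G : Fin n → Fin n → Prop) (i j : Fin n) (c : List (Fin n)) : Prop :=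
  IsCycleChain G c ∧ c.head? = some i ∧ c.getLast? = some j

/-- The list of 2-cycles of a cycle chain. -/
def chainEdges {n : ℕ} (c : List (Fin n)) : List (Sym2 (Fin n)) :=
  List.zipWith (fun a b => s(a, b)) c c.tail

/-- The cycle chain `c` is alternating with respect to `M`: its 2-cycles are alternately
in `M` and outside `M`, with the first and last 2-cycle in `M` (so its length is odd). -/
def IsAltChain {n : ℕ} (M : Finset (Sym2 (Fin n))) (c : List (Fin n)) : Prop :=
  Odd (chainEdges c).length ∧
  ∀ k (h : k < (chainEdges c).length), ((chainEdges c).get ⟨k, h⟩ ∈ M ↔ Even k)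

/-- The digraph of a square matrix: edge `(i,j)` iff `A i j ≠ 0`. -/
def DA {n : ℕ} (A : Matrix (Fin n) (Fin n) ℝ) : Fin n → Fin n → Prop :=
  fun i j => A i j ≠ 0

/-- The cycle product `a_{ij} a_{ji}` of a 2-cycle. -/
def cycProd {n : ℕ} (A : Matrix (Fin n) (Fin n) ℝ) (e : Sym2 (Fin n)) : ℝ :=
  Sym2.lift ⟨fun i j => A i j * A j i, fun i j => mul_comm _ _⟩ e

/-- The matching product η(M) of a matching `M`. -/
noncomputable def matchProd {n : ℕ} (A : Matrix (Fin n) (Fin n) ℝ)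
    (M : Finset (Sym2 (Fin n))) : ℝ :=
  ∏ e ∈ M, cycProd A e

/-- The (finite) collection of all maximum matchings of `D(A)`. -/
noncomputable def maxMatchings {n : ℕ} (A : Matrix (Fin n) (Fin n) ℝ) :
    Finset (Finset (Sym2 (Fin n))) :=
  {M | IsMaxMatching (DA A) M}.toFinite.toFinset

/-- Δ_A: the sum of the matching products over all maximum matchings of `D(A)`. -/
noncomputable def Delta {n : ℕ} (A : Matrix (Fin n) (Fin n) ℝ) : ℝ :=
  ∑ M ∈ maxMatchings A, matchProd A M

/-- 𝕄(i,j): maximum matchings with respect to which some cycle chain from `i` to `j`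
is an alternating cycle chain. -/
def MMset {n : ℕ} (A : Matrix (Fin n) (Fin n) ℝ) (i j : Fin n) :
    Set (Finset (Sym2 (Fin n))) :=
  {M | IsMaxMatching (DA A) M ∧ ∃ c, IsCycleChainBtw (DA A) i j c ∧ IsAltChain M c}

/-- `i` and `j` are maximally matchable: 𝕄(i,j) ≠ ∅. -/
def MaxMatchable {n : ℕ} (A : Matrix (Fin n) (Fin n) ℝ) (i j : Fin n) : Prop :=
  (MMset A i j).Nonempty

open scoped Classical in
/-- The (unique) alternating cycle chain from `i` to `j`, when it exists. -/
noncomputable def theChain {n : ℕ} (A : Matrix (Fin n) (Fin n) ℝ) (i j : Fin n) :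
    List (Fin n) :=
  if h : ∃ c, IsCycleChainBtw (DA A) i j c ∧ ∃ M ∈ MMset A i j, IsAltChain M c
  then h.choose else []

/-- The path product along a cycle chain: `a_{i₁ i₂} a_{i₂ i₃} ⋯ a_{i_m i_{m+1}}`. -/
def pathProd {n : ℕ} (A : Matrix (Fin n) (Fin n) ℝ) (c : List (Fin n)) : ℝ :=
  (List.zipWith (fun a b => A a b) c c.tail).prod

open scoped Classical in
/-- β_{ij} = (−1)^{(m−1)/2} P_m(i,j) for maximally matchable `i, j`, and `0` otherwise. -/
noncomputable def beta {n : ℕ} (A : Matrix (Fin n) (Fin n) ℝ) (i j : Fin n) : ℝ :=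
  if MaxMatchable A i j then
    (-1 : ℝ) ^ (((theChain A i j).length - 2) / 2) * pathProd A (theChain A i j)
  else 0

/-- β̄_{i,j}(M): product of the cycle products of the 2-cycles of `M` not contained in
the alternating cycle chain from `i` to `j`. -/
noncomputable def betaBar {n : ℕ} (A : Matrix (Fin n) (Fin n) ℝ) (i j : Fin n)
    (M : Finset (Sym2 (Fin n))) : ℝ :=
  ∏ e ∈ M.filter (fun e => e ∉ chainEdges (theChain A i j)), cycProd A e

/-- μ_{ij} = β_{ij} · Σ_{M ∈ 𝕄(i,j)} β̄_{i,j}(M). -/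
noncomputable def mu {n : ℕ} (A : Matrix (Fin n) (Fin n) ℝ) (i j : Fin n) : ℝ :=
  beta A i j * ∑ M ∈ (MMset A i j).toFinite.toFinset, betaBar A i j M

/-- `X` is a group inverse of `A`. -/
def IsGroupInverse {n : ℕ} (A X : Matrix (Fin n) (Fin n) ℝ) : Prop :=
  A * X * A = A ∧ X * A * X = X ∧ A * X = X * A

/-- A tree digraph: strongly connected and all of its cycles have length 2. -/
def IsTreeDigraph {n : ℕ} (G : Fin n → Fin n → Prop) : Prop :=
  StronglyConnected G ∧
  ∀ (a : Fin n) (l : List (Fin n)), (a :: l).Nodup → List.Chain G a l →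
    G ((a :: l).getLast (List.cons_ne_nil a l)) a → (a :: l).length = 2

/-- A star tree digraph: a tree digraph with a center adjacent to every other vertex,
every other vertex being adjacent only to the center. -/
def IsStarTree {n : ℕ} (G : Fin n → Fin n → Prop) : Prop :=
  IsTreeDigraph G ∧
  ∃ c : Fin n, (∀ j, j ≠ c → Adjd G c j) ∧ ∀ i j, Adjd G i j → i = c ∨ j = c

/-- A corona digraph: a simple symmetric digraph in which each non-pendant vertex is
adjacent to exactly one pendant vertex. -/
def IsCorona {n : ℕ} (G : Fin n → Fin n → Prop) : Prop :=
  IsSSD G ∧ ∀ i, ¬ Pendant G i → ∃! j, Adjd G i j ∧ Pendant G j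

/-- 𝕄(i): the maximum matchings in which vertex `i` is matched. -/
noncomputable def MMi {n : ℕ} (A : Matrix (Fin n) (Fin n) ℝ) (i : Fin n) :
    Finset (Finset (Sym2 (Fin n))) :=
  {M | IsMaxMatching (DA A) M ∧ ∃ e ∈ M, i ∈ e}.toFinite.toFinset

namespace CorAux

open Finset
open scoped Classical

variable {n : ℕ}

lemma adjd_symm {G : Fin n → Fin n → Prop} {i j : Fin n} (h : Adjd G i j) : Adjd G j i :=
  ⟨Ne.symm h.1, h.2.2, h.2.1⟩

variable (A : Matrix (Fin n) (Fin n) ℝ)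

lemma diag_zero (hssd : IsSSD (DA A)) (i : Fin n) : A i i = 0 := by
  by_contra h; exact hssd.1 i h

lemma a_symm (hssd : IsSSD (DA A)) {i j : Fin n} (h : A i j ≠ 0) : A j i ≠ 0 :=
  hssd.2 i j h

lemma adj_iff (hssd : IsSSD (DA A)) {i j : Fin n} : Adjd (DA A) i j ↔ A i j ≠ 0 := by
  constructor
  · exact fun h => h.2.1
  · intro h
    refine ⟨fun hij => ?_, h, a_symm A hssd h⟩
    subst hij; exact hssd.1 i h

noncomputable def pnb (p : Fin n) : Fin n :=
  if h : Pendant (DA A) p then h.exists.choose else p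

lemma adj_pnb {p : Fin n} (hp : Pendant (DA A) p) : Adjd (DA A) p (pnb A p) := by
  rw [pnb, dif_pos hp]; exact hp.exists.choose_spec

lemma eq_pnb {p j : Fin n} (hp : Pendant (DA A) p) (h : Adjd (DA A) p j) : j = pnb A p :=
  hp.unique h (adj_pnb A hp)

lemma pnb_ne {p : Fin n} (hp : Pendant (DA A) p) : A p (pnb A p) ≠ 0 := (adj_pnb A hp).2.1

lemma pnb_ne' {p : Fin n} (hp : Pendant (DA A) p) : A (pnb A p) p ≠ 0 := (adj_pnb A hp).2.2

lemma pendant_row (hssd : IsSSD (DA A)) {p k : Fin n} (hp : Pendant (DA A) p) :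
    A p k ≠ 0 ↔ k = pnb A p :=
  ⟨fun h => eq_pnb A hp ((adj_iff A hssd).2 h), fun h => h ▸ pnb_ne A hp⟩

lemma pendant_col (hssd : IsSSD (DA A)) {p k : Fin n} (hp : Pendant (DA A) p) :
    A k p ≠ 0 ↔ k = pnb A p := by
  constructor
  · intro h; exact (pendant_row A hssd hp).1 (a_symm A hssd h)
  · rintro rfl; exact pnb_ne' A hp

lemma reach_pair (hssd : IsSSD (DA A)) {p p' : Fin n} (hp : Pendant (DA A) p)
    (hp' : Pendant (DA A) p') (hadj : Adjd (DA A) p p') {x : Fin n}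
    (hx : Relation.ReflTransGen (DA A) p x) : x = p ∨ x = p' := by
  induction hx with
  | refl => exact Or.inl rfl
  | tail hab hbc ih =>
    rcases ih with rfl | rfl
    · have h1 := eq_pnb A hp ((adj_iff A hssd).2 hbc)
      have h2 := eq_pnb A hp hadj
      exact Or.inr (h1.trans h2.symm)
    · have h1 := eq_pnb A hp' ((adj_iff A hssd).2 hbc)
      have h2 := eq_pnb A hp' (adjd_symm hadj)
      exact Or.inl (h1.trans h2.symm)

lemma no_pp (hssd : IsSSD (DA A)) (hSC : StronglyConnected (DA A))
    (hq0 : ∃ q, ¬ Pendant (DA A) q) {p p' : Fin n}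
    (hp : Pendant (DA A) p) (hp' : Pendant (DA A) p') : A p p' = 0 := by
  by_contra h
  obtain ⟨q, hq⟩ := hq0
  rcases reach_pair A hssd hp hp' ((adj_iff A hssd).2 h) (hSC p q) with rfl | rfl
  · exact hq hp
  · exact hq hp'

lemma pnb_np (hssd : IsSSD (DA A)) (hSC : StronglyConnected (DA A))
    (hq0 : ∃ q, ¬ Pendant (DA A) q) {p : Fin n} (hp : Pendant (DA A) p) :
    ¬ Pendant (DA A) (pnb A p) :=
  fun h => pnb_ne A hp (no_pp A hssd hSC hq0 hp h)

/-! ### The pendant / non-pendant vertex sets -/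

noncomputable def Pf : Finset (Fin n) := Finset.univ.filter (fun p => Pendant (DA A) p)
noncomputable def Qf : Finset (Fin n) := Finset.univ.filter (fun q => ¬ Pendant (DA A) q)
noncomputable def Nb (q : Fin n) : Finset (Fin n) :=
  Finset.univ.filter (fun p => Pendant (DA A) p ∧ pnb A p = q)
noncomputable def sig (q : Fin n) : ℝ := ∑ p ∈ Nb A q, A q p * A p q

lemma mem_Pf {p : Fin n} : p ∈ Pf A ↔ Pendant (DA A) p := by simp [Pf]
lemma mem_Qf {q : Fin n} : q ∈ Qf A ↔ ¬ Pendant (DA A) q := by simp [Qf]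
lemma mem_Nb {q p : Fin n} : p ∈ Nb A q ↔ Pendant (DA A) p ∧ pnb A p = q := by simp [Nb]

lemma sum_pf (hssd : IsSSD (DA A)) {q : Fin n} (hq : ¬ Pendant (DA A) q) (j : Fin n) :
    ∑ p ∈ Pf A, A q p * A p j = if j = q then sig A q else 0 := by
  split_ifs with hj
  · rw [hj, sig]
    refine (Finset.sum_subset ?_ ?_).symm
    · intro p hp; rw [mem_Nb] at hp; rw [mem_Pf]; exact hp.1
    · intro p hpf hnb
      rw [mem_Pf] at hpf
      have hz : A q p = 0 := by
        by_contra h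
        exact hnb ((mem_Nb A).2 ⟨hpf, ((pendant_col A hssd hpf).1 h).symm⟩)
      rw [hz, zero_mul]
  · apply Finset.sum_eq_zero
    intro p hp
    rw [mem_Pf] at hp
    by_cases h : A q p = 0
    · rw [h, zero_mul]
    · have h1 : q = pnb A p := (pendant_col A hssd hp).1 h
      have hz : A p j = 0 := by
        by_contra h2
        exact hj (((pendant_row A hssd hp).1 h2).trans h1.symm)
      rw [hz, mul_zero]

lemma cancel1 {s : ℝ} (hs : s ≠ 0) (T : ℝ) : s * -(s⁻¹ * T) + T = 0 := by
  rw [mul_neg, ← mul_assoc, mul_inv_cancel₀ hs, one_mul, neg_add_cancel]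

lemma cancel2 {s : ℝ} (hs : s ≠ 0) (T : ℝ) : s * -(T * s⁻¹) + T = 0 := by
  have h : s * -(T * s⁻¹) = -(s * s⁻¹ * T) := by ring
  rw [h, mul_inv_cancel₀ hs, one_mul, neg_add_cancel]

lemma aux1 {s : ℝ} (hs : s ≠ 0) (a : ℝ) : s * (a * s⁻¹) = a := by
  have h : s * (a * s⁻¹) = s * s⁻¹ * a := by ring
  rw [h, mul_inv_cancel₀ hs, one_mul]

lemma aux2 {s : ℝ} (hs : s ≠ 0) (a : ℝ) : s * (a * s⁻¹ * s⁻¹) = a * s⁻¹ := by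
  have h : s * (a * s⁻¹ * s⁻¹) = s * s⁻¹ * (a * s⁻¹) := by ring
  rw [h, mul_inv_cancel₀ hs, one_mul]

lemma aux3 {s : ℝ} (hs : s ≠ 0) (a b c d : ℝ) :
    s * -(a * s⁻¹ * s⁻¹ * b * c * d) = -(a * s⁻¹ * b * c * d) := by
  have h : s * -(a * s⁻¹ * s⁻¹ * b * c * d) = s * s⁻¹ * -(a * s⁻¹ * b * c * d) := by ring
  rw [h, mul_inv_cancel₀ hs, one_mul]

lemma sum_pf_mul (hssd : IsSSD (DA A)) {q : Fin n} (hq : ¬ Pendant (DA A) q) (j : Fin n)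
    (c : ℝ) :
    ∑ p ∈ Pf A, (A q p * A p j) * c = if j = q then sig A q * c else 0 := by
  rw [← Finset.sum_mul, sum_pf A hssd hq j]
  split_ifs <;> simp

/-! ### The candidate group inverse -/

noncomputable def X0 : Matrix (Fin n) (Fin n) ℝ := Matrix.of fun i j =>
  if Pendant (DA A) i then
    (if Pendant (DA A) j then
      -(A i (pnb A i) * (sig A (pnb A i))⁻¹ * A (pnb A i) (pnb A j) * (sig A (pnb A j))⁻¹
          * A (pnb A j) j)
     else A i j * (sig A j)⁻¹)
  else (if Pendant (DA A) j then (sig A i)⁻¹ * A i j else 0)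

noncomputable def E0 : Matrix (Fin n) (Fin n) ℝ := Matrix.of fun i j =>
  if Pendant (DA A) i then
    (if Pendant (DA A) j then A i (pnb A i) * (sig A (pnb A i))⁻¹ * A (pnb A i) j else 0)
  else (if Pendant (DA A) j then 0 else (if i = j then 1 else 0))

variable {i j : Fin n}

lemma X0_pp (hi : Pendant (DA A) i) (hj : Pendant (DA A) j) :
    X0 A i j = -(A i (pnb A i) * (sig A (pnb A i))⁻¹ * A (pnb A i) (pnb A j)
      * (sig A (pnb A j))⁻¹ * A (pnb A j) j) := by
  simp [X0, hi, hj]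

lemma X0_pq (hi : Pendant (DA A) i) (hj : ¬ Pendant (DA A) j) :
    X0 A i j = A i j * (sig A j)⁻¹ := by simp [X0, hi, hj]

lemma X0_qp (hi : ¬ Pendant (DA A) i) (hj : Pendant (DA A) j) :
    X0 A i j = (sig A i)⁻¹ * A i j := by simp [X0, hi, hj]

lemma X0_qq (hi : ¬ Pendant (DA A) i) (hj : ¬ Pendant (DA A) j) :
    X0 A i j = 0 := by simp [X0, hi, hj]

lemma E0_pp (hi : Pendant (DA A) i) (hj : Pendant (DA A) j) :
    E0 A i j = A i (pnb A i) * (sig A (pnb A i))⁻¹ * A (pnb A i) j := by simp [E0, hi, hj]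

lemma E0_pq (hi : Pendant (DA A) i) (hj : ¬ Pendant (DA A) j) :
    E0 A i j = 0 := by simp [E0, hi, hj]

lemma E0_qp (hi : ¬ Pendant (DA A) i) (hj : Pendant (DA A) j) :
    E0 A i j = 0 := by simp [E0, hi, hj]

lemma E0_qq (hi : ¬ Pendant (DA A) i) (hj : ¬ Pendant (DA A) j) :
    E0 A i j = if i = j then 1 else 0 := by simp [E0, hi, hj]

lemma split_sum (F : Fin n → ℝ) :
    (∑ k, F k) = (∑ k ∈ Pf A, F k) + ∑ k ∈ Qf A, F k := by
  rw [Pf, Qf]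
  exact (Finset.sum_filter_add_sum_filter_not _ _ _).symm

section Products

variable (hssd : IsSSD (DA A)) (hSC : StronglyConnected (DA A))
  (hq0 : ∃ q, ¬ Pendant (DA A) q) (hsig : ∀ q, ¬ Pendant (DA A) q → sig A q ≠ 0)

include hssd hSC hq0 hsig

lemma hAX : A * X0 A = E0 A := by
  ext i j
  rw [Matrix.mul_apply]
  by_cases hi : Pendant (DA A) i
  · have hw : ¬ Pendant (DA A) (pnb A i) := pnb_np A hssd hSC hq0 hi
    rw [Finset.sum_eq_single (pnb A i)]
    · by_cases hj : Pendant (DA A) j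
      · rw [X0_qp A hw hj, E0_pp A hi hj]; ring
      · rw [X0_qq A hw hj, E0_pq A hi hj, mul_zero]
    · intro k _ hk
      have hz : A i k = 0 := by
        by_contra h; exact hk ((pendant_row A hssd hi).1 h)
      rw [hz, zero_mul]
    · intro h; exact absurd (Finset.mem_univ _) h
  · rw [split_sum]
    by_cases hj : Pendant (DA A) j
    · -- (nonpendant, pendant) entry : total 0
      have hw : ¬ Pendant (DA A) (pnb A j) := pnb_np A hssd hSC hq0 hj
      have hQ : (∑ k ∈ Qf A, A i k * X0 A k j)
          = A i (pnb A j) * ((sig A (pnb A j))⁻¹ * A (pnb A j) j) := by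
        rw [Finset.sum_eq_single_of_mem (pnb A j) ((mem_Qf A).2 hw)]
        · rw [X0_qp A hw hj]
        · intro k hk hkne
          rw [X0_qp A ((mem_Qf A).1 hk) hj]
          have hz : A k j = 0 := by
            by_contra h; exact hkne ((pendant_col A hssd hj).1 h)
          rw [hz, mul_zero, mul_zero]
      have hP : (∑ k ∈ Pf A, A i k * X0 A k j)
          = ∑ k ∈ Pf A, (A i k * A k i) *
              (-((sig A i)⁻¹ * (A i (pnb A j) * ((sig A (pnb A j))⁻¹ * A (pnb A j) j)))) := by
        apply Finset.sum_congr rfl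
        intro p hp
        rw [mem_Pf] at hp
        by_cases h : A i p = 0
        · rw [h]; ring
        · have hpi : i = pnb A p := (pendant_col A hssd hp).1 h
          rw [X0_pp A hp hj, ← hpi]
          ring
      rw [hP, hQ, sum_pf_mul A hssd hi i, if_pos rfl, E0_qp A hi hj]
      exact cancel1 (hsig i hi) _
    · -- (nonpendant, nonpendant) entry
      have hQ : (∑ k ∈ Qf A, A i k * X0 A k j) = 0 :=
        Finset.sum_eq_zero fun k hk => by
          rw [X0_qq A ((mem_Qf A).1 hk) hj, mul_zero]
      have hP : (∑ k ∈ Pf A, A i k * X0 A k j)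
          = ∑ k ∈ Pf A, (A i k * A k j) * (sig A j)⁻¹ := by
        apply Finset.sum_congr rfl
        intro p hp
        rw [X0_pq A ((mem_Pf A).1 hp) hj]; ring
      rw [hP, hQ, add_zero, sum_pf_mul A hssd hi j, E0_qq A hi hj]
      by_cases h : i = j
      · subst h; rw [if_pos rfl, if_pos rfl]; exact mul_inv_cancel₀ (hsig i hi)
      · rw [if_neg (fun hh => h hh.symm), if_neg h]

lemma hXA : X0 A * A = E0 A := by
  ext i j
  rw [Matrix.mul_apply, split_sum]
  by_cases hi : Pendant (DA A) i
  · have hw : ¬ Pendant (DA A) (pnb A i) := pnb_np A hssd hSC hq0 hi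
    have hQ : (∑ k ∈ Qf A, X0 A i k * A k j)
        = A i (pnb A i) * (sig A (pnb A i))⁻¹ * A (pnb A i) j := by
      rw [Finset.sum_eq_single_of_mem (pnb A i) ((mem_Qf A).2 hw)]
      · rw [X0_pq A hi hw]
      · intro k hk hkne
        rw [X0_pq A hi ((mem_Qf A).1 hk)]
        have hz : A i k = 0 := by
          by_contra h; exact hkne ((pendant_row A hssd hi).1 h)
        rw [hz, zero_mul, zero_mul]
    by_cases hj : Pendant (DA A) j
    · -- (pendant, pendant)
      have hP : (∑ k ∈ Pf A, X0 A i k * A k j) = 0 :=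
        Finset.sum_eq_zero fun k hk => by
          rw [no_pp A hssd hSC hq0 ((mem_Pf A).1 hk) hj, mul_zero]
      rw [hP, hQ, E0_pp A hi hj, zero_add]
    · -- (pendant, nonpendant)
      have hP : (∑ k ∈ Pf A, X0 A i k * A k j)
          = ∑ k ∈ Pf A, (A j k * A k j) *
              (-(A i (pnb A i) * (sig A (pnb A i))⁻¹ * A (pnb A i) j * (sig A j)⁻¹)) := by
        apply Finset.sum_congr rfl
        intro p hp
        rw [mem_Pf] at hp
        by_cases h : A p j = 0
        · rw [h, mul_zero]; ring
        · have hpj : j = pnb A p := (pendant_row A hssd hp).1 h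
          rw [X0_pp A hi hp, ← hpj]
          ring
      rw [hP, hQ, sum_pf_mul A hssd hj j, if_pos rfl, E0_pq A hi hj]
      exact cancel2 (hsig j hj) _
  · have hQ : (∑ k ∈ Qf A, X0 A i k * A k j) = 0 :=
      Finset.sum_eq_zero fun k hk => by
        rw [X0_qq A hi ((mem_Qf A).1 hk), zero_mul]
    by_cases hj : Pendant (DA A) j
    · -- (nonpendant, pendant)
      have hP : (∑ k ∈ Pf A, X0 A i k * A k j) = 0 :=
        Finset.sum_eq_zero fun k hk => by
          rw [no_pp A hssd hSC hq0 ((mem_Pf A).1 hk) hj, mul_zero]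
      rw [hP, hQ, E0_qp A hi hj, add_zero]
    · -- (nonpendant, nonpendant)
      have hP : (∑ k ∈ Pf A, X0 A i k * A k j)
          = ∑ k ∈ Pf A, (A i k * A k j) * (sig A i)⁻¹ := by
        apply Finset.sum_congr rfl
        intro p hp
        rw [X0_qp A hi ((mem_Pf A).1 hp)]; ring
      rw [hP, hQ, add_zero, sum_pf_mul A hssd hi j, E0_qq A hi hj]
      by_cases h : i = j
      · subst h; rw [if_pos rfl, if_pos rfl]; exact mul_inv_cancel₀ (hsig i hi)
      · rw [if_neg (fun hh => h hh.symm), if_neg h]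

lemma hEA : E0 A * A = A := by
  ext i j
  rw [Matrix.mul_apply]
  by_cases hi : Pendant (DA A) i
  · have hw : ¬ Pendant (DA A) (pnb A i) := pnb_np A hssd hSC hq0 hi
    rw [split_sum]
    have hQ : (∑ k ∈ Qf A, E0 A i k * A k j) = 0 :=
      Finset.sum_eq_zero fun k hk => by
        rw [E0_pq A hi ((mem_Qf A).1 hk), zero_mul]
    by_cases hj : Pendant (DA A) j
    · have hP : (∑ k ∈ Pf A, E0 A i k * A k j) = 0 :=
        Finset.sum_eq_zero fun k hk => by
          rw [no_pp A hssd hSC hq0 ((mem_Pf A).1 hk) hj, mul_zero]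
      rw [hP, hQ, add_zero, no_pp A hssd hSC hq0 hi hj]
    · have hP : (∑ k ∈ Pf A, E0 A i k * A k j)
          = ∑ k ∈ Pf A, (A (pnb A i) k * A k j) * (A i (pnb A i) * (sig A (pnb A i))⁻¹) := by
        apply Finset.sum_congr rfl
        intro p hp
        rw [E0_pp A hi ((mem_Pf A).1 hp)]; ring
      rw [hP, hQ, add_zero, sum_pf_mul A hssd hw j]
      by_cases h : j = pnb A i
      · rw [if_pos h, h]
        exact aux1 (hsig _ hw) _
      · rw [if_neg h]
        have hz : A i j = 0 := by
          by_contra h2; exact h ((pendant_row A hssd hi).1 h2)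
        rw [hz]
  · rw [Finset.sum_eq_single i]
    · rw [E0_qq A hi hi, if_pos rfl, one_mul]
    · intro k _ hk
      by_cases hkp : Pendant (DA A) k
      · rw [E0_qp A hi hkp, zero_mul]
      · rw [E0_qq A hi hkp, if_neg (fun hh => hk hh.symm), zero_mul]
    · intro h; exact absurd (Finset.mem_univ _) h

lemma hEX : E0 A * X0 A = X0 A := by
  ext i j
  rw [Matrix.mul_apply]
  by_cases hi : Pendant (DA A) i
  · have hw : ¬ Pendant (DA A) (pnb A i) := pnb_np A hssd hSC hq0 hi
    have h0 : sig A (pnb A i) ≠ 0 := hsig _ hw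
    rw [split_sum]
    have hQ : (∑ k ∈ Qf A, E0 A i k * X0 A k j) = 0 :=
      Finset.sum_eq_zero fun k hk => by
        rw [E0_pq A hi ((mem_Qf A).1 hk), zero_mul]
    by_cases hj : Pendant (DA A) j
    · -- (pendant, pendant)
      have hP : (∑ k ∈ Pf A, E0 A i k * X0 A k j)
          = ∑ k ∈ Pf A, (A (pnb A i) k * A k (pnb A i)) *
              (-(A i (pnb A i) * (sig A (pnb A i))⁻¹ * (sig A (pnb A i))⁻¹
                * A (pnb A i) (pnb A j) * (sig A (pnb A j))⁻¹ * A (pnb A j) j)) := by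
        apply Finset.sum_congr rfl
        intro p hp
        rw [mem_Pf] at hp
        rw [E0_pp A hi hp, X0_pp A hp hj]
        by_cases h : A (pnb A i) p = 0
        · rw [h]; ring
        · have hpi : pnb A i = pnb A p := (pendant_col A hssd hp).1 h
          rw [← hpi]; ring
      rw [hP, hQ, add_zero, sum_pf_mul A hssd hw (pnb A i), if_pos rfl, X0_pp A hi hj]
      exact aux3 (hsig _ hw) _ _ _ _
    · -- (pendant, nonpendant)
      have hP : (∑ k ∈ Pf A, E0 A i k * X0 A k j)
          = ∑ k ∈ Pf A, (A (pnb A i) k * A k j) *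
              (A i (pnb A i) * (sig A (pnb A i))⁻¹ * (sig A j)⁻¹) := by
        apply Finset.sum_congr rfl
        intro p hp
        rw [mem_Pf] at hp
        rw [E0_pp A hi hp, X0_pq A hp hj]; ring
      rw [hP, hQ, add_zero, sum_pf_mul A hssd hw j, X0_pq A hi hj]
      by_cases h : j = pnb A i
      · rw [if_pos h, h]
        exact aux2 (hsig _ hw) _
      · rw [if_neg h]
        have hz : A i j = 0 := by
          by_contra h2; exact h ((pendant_row A hssd hi).1 h2)
        rw [hz, zero_mul]
  · rw [Finset.sum_eq_single i]
    · rw [E0_qq A hi hi, if_pos rfl, one_mul]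
    · intro k _ hk
      by_cases hkp : Pendant (DA A) k
      · rw [E0_qp A hi hkp, zero_mul]
      · rw [E0_qq A hi hkp, if_neg (fun hh => hk hh.symm), zero_mul]
    · intro h; exact absurd (Finset.mem_univ _) h

lemma X0_groupInverse : IsGroupInverse A (X0 A) := by
  have h1 := hAX A hssd hSC hq0 hsig
  have h2 := hXA A hssd hSC hq0 hsig
  have h3 := hEA A hssd hSC hq0 hsig
  have h4 := hEX A hssd hSC hq0 hsig
  refine ⟨?_, ?_, h1.trans h2.symm⟩
  · rw [h1, h3]
  · rw [h2, h4]

end Products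

end CorAux
namespace CorAux

open Finset
open scoped Classical

variable {n : ℕ} (A : Matrix (Fin n) (Fin n) ℝ)

/-! ### Structure of maximum matchings -/

noncomputable def pickQ (e : Sym2 (Fin n)) : Fin n :=
  if h : ∃ q, q ∈ e ∧ ¬ Pendant (DA A) q then h.choose else (Quot.out e).1

lemma pickQ_spec {e : Sym2 (Fin n)} (h : ∃ q, q ∈ e ∧ ¬ Pendant (DA A) q) :
    pickQ A e ∈ e ∧ ¬ Pendant (DA A) (pickQ A e) := by
  rw [pickQ, dif_pos h]; exact h.choose_spec

lemma edge_np (hssd : IsSSD (DA A)) (hSC : StronglyConnected (DA A))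
    (hq0 : ∃ q, ¬ Pendant (DA A) q) {e : Sym2 (Fin n)} (he : IsEdge (DA A) e) :
    ∃ q, q ∈ e ∧ ¬ Pendant (DA A) q := by
  obtain ⟨i, j, rfl, hadj⟩ := he
  by_cases hi : Pendant (DA A) i
  · by_cases hj : Pendant (DA A) j
    · exact absurd (no_pp A hssd hSC hq0 hi hj) hadj.2.1
    · exact ⟨j, by simp, hj⟩
  · exact ⟨i, by simp, hi⟩

lemma matching_card_le (hssd : IsSSD (DA A)) (hSC : StronglyConnected (DA A))
    (hq0 : ∃ q, ¬ Pendant (DA A) q) {M : Finset (Sym2 (Fin n))}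
    (hM : IsMatching (DA A) M) : M.card ≤ (Qf A).card := by
  apply Finset.card_le_card_of_injOn (pickQ A)
  · intro e he
    rw [Finset.mem_coe, mem_Qf]
    exact (pickQ_spec A (edge_np A hssd hSC hq0 (hM.1 e he))).2
  · intro e he e' he' hee
    rw [Finset.mem_coe] at he he'
    by_contra hne
    have h1 := pickQ_spec A (edge_np A hssd hSC hq0 (hM.1 e he))
    have h2 := pickQ_spec A (edge_np A hssd hSC hq0 (hM.1 e' he'))
    exact hM.2 e he e' he' hne _ h1.1 (hee ▸ h2.1)

noncomputable def toM (x : ∀ q ∈ Qf A, Fin n) : Finset (Sym2 (Fin n)) :=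
  (Qf A).attach.image (fun q => s(q.1, x q.1 q.2))

lemma pi_mem {x : ∀ q ∈ Qf A, Fin n} (hx : x ∈ (Qf A).pi (fun q => Nb A q))
    {q : Fin n} (hq : q ∈ Qf A) :
    Pendant (DA A) (x q hq) ∧ pnb A (x q hq) = q := by
  have := Finset.mem_pi.1 hx q hq
  rwa [mem_Nb] at this

lemma toM_injOn {x : ∀ q ∈ Qf A, Fin n} (hx : x ∈ (Qf A).pi (fun q => Nb A q)) :
    Set.InjOn (fun q : {q // q ∈ Qf A} => s(q.1, x q.1 q.2)) ↑(Qf A).attach := by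
  intro a _ b hb hab
  rcases Sym2.eq_iff.1 hab with ⟨h1, _⟩ | ⟨h1, _⟩
  · exact Subtype.ext h1
  · exfalso
    have hpa : Pendant (DA A) (x b.1 b.2) := (pi_mem A hx b.2).1
    rw [← h1] at hpa
    exact (mem_Qf A).1 a.2 hpa

lemma toM_card {x : ∀ q ∈ Qf A, Fin n} (hx : x ∈ (Qf A).pi (fun q => Nb A q)) :
    (toM A x).card = (Qf A).card := by
  rw [toM, Finset.card_image_of_injOn (toM_injOn A hx), Finset.card_attach]

lemma mem_toM {x : ∀ q ∈ Qf A, Fin n} {e : Sym2 (Fin n)} :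
    e ∈ toM A x ↔ ∃ (q : Fin n) (hq : q ∈ Qf A), e = s(q, x q hq) := by
  rw [toM, Finset.mem_image]
  constructor
  · rintro ⟨a, _, rfl⟩; exact ⟨a.1, a.2, rfl⟩
  · rintro ⟨q, hq, rfl⟩; exact ⟨⟨q, hq⟩, Finset.mem_attach _ _, rfl⟩

lemma toM_isMatching (hssd : IsSSD (DA A)) {x : ∀ q ∈ Qf A, Fin n}
    (hx : x ∈ (Qf A).pi (fun q => Nb A q)) : IsMatching (DA A) (toM A x) := by
  constructor
  · intro e he
    obtain ⟨q, hq, rfl⟩ := (mem_toM A).1 he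
    have hp := pi_mem A hx hq
    have hadj : Adjd (DA A) (x q hq) q := by
      have := adj_pnb A hp.1; rwa [hp.2] at this
    exact ⟨q, _, rfl, adjd_symm hadj⟩
  · intro e he f hf hef v hv hvf
    obtain ⟨q, hq, rfl⟩ := (mem_toM A).1 he
    obtain ⟨q', hq', rfl⟩ := (mem_toM A).1 hf
    have hp := pi_mem A hx hq
    have hp' := pi_mem A hx hq'
    have hne : q ≠ q' := by rintro rfl; exact hef rfl
    rw [Sym2.mem_iff] at hv hvf
    rcases hv with rfl | rfl
    · rcases hvf with h | h
      · exact hne h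
      · have := hp'.1; rw [← h] at this; exact (mem_Qf A).1 hq this
    · rcases hvf with h | h
      · have := hp.1; rw [h] at this; exact (mem_Qf A).1 hq' this
      · exact hne (by rw [← hp.2, ← hp'.2, h])

lemma toM_isMax (hssd : IsSSD (DA A)) (hSC : StronglyConnected (DA A))
    (hq0 : ∃ q, ¬ Pendant (DA A) q) {x : ∀ q ∈ Qf A, Fin n}
    (hx : x ∈ (Qf A).pi (fun q => Nb A q)) : IsMaxMatching (DA A) (toM A x) :=
  ⟨toM_isMatching A hssd hx,
    fun _ hM' => (matching_card_le A hssd hSC hq0 hM').trans_eq (toM_card A hx).symm⟩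

lemma nb_nonempty (hD : InClassD (DA A)) {q : Fin n} (hq : ¬ Pendant (DA A) q) :
    ∃ p, p ∈ Nb A q := by
  obtain ⟨j, hadj, hpend⟩ := hD.2 q hq
  exact ⟨j, (mem_Nb A).2 ⟨hpend, (eq_pnb A hpend (adjd_symm hadj)).symm⟩⟩

noncomputable def xdef : ∀ q ∈ Qf A, Fin n := fun q _ =>
  if h : ∃ p, p ∈ Nb A q then h.choose else q

lemma xdef_mem_pi (hD : InClassD (DA A)) : xdef A ∈ (Qf A).pi (fun q => Nb A q) := by
  refine Finset.mem_pi.2 fun q hq => ?_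
  have h : ∃ p, p ∈ Nb A q := nb_nonempty A hD ((mem_Qf A).1 hq)
  show (if h : ∃ p, p ∈ Nb A q then h.choose else q) ∈ Nb A q
  rw [dif_pos h]
  exact h.choose_spec

lemma max_card (hD : InClassD (DA A)) (hssd : IsSSD (DA A)) (hSC : StronglyConnected (DA A))
    (hq0 : ∃ q, ¬ Pendant (DA A) q) {M : Finset (Sym2 (Fin n))}
    (hM : IsMaxMatching (DA A) M) : M.card = (Qf A).card := by
  refine le_antisymm (matching_card_le A hssd hSC hq0 hM.1) ?_
  calc (Qf A).card = (toM A (xdef A)).card := (toM_card A (xdef_mem_pi A hD)).symm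
    _ ≤ M.card := hM.2 _ (toM_isMatching A hssd (xdef_mem_pi A hD))

lemma max_eq_toM (hD : InClassD (DA A)) (hssd : IsSSD (DA A)) (hSC : StronglyConnected (DA A))
    (hq0 : ∃ q, ¬ Pendant (DA A) q) {M : Finset (Sym2 (Fin n))}
    (hM : IsMaxMatching (DA A) M) :
    ∃ x, ∃ _ : x ∈ (Qf A).pi (fun q => Nb A q), M = toM A x := by
  have hcard := max_card A hD hssd hSC hq0 hM
  have hinj : Set.InjOn (pickQ A) ↑M := by
    intro e he e' he' hee
    rw [Finset.mem_coe] at he he'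
    by_contra hne
    have h1 := pickQ_spec A (edge_np A hssd hSC hq0 (hM.1.1 e he))
    have h2 := pickQ_spec A (edge_np A hssd hSC hq0 (hM.1.1 e' he'))
    exact hM.1.2 e he e' he' hne _ h1.1 (hee ▸ h2.1)
  have himg : M.image (pickQ A) = Qf A := by
    apply Finset.eq_of_subset_of_card_le
    · intro q hq
      obtain ⟨e, he, rfl⟩ := Finset.mem_image.1 hq
      rw [mem_Qf]
      exact (pickQ_spec A (edge_np A hssd hSC hq0 (hM.1.1 e he))).2
    · rw [Finset.card_image_of_injOn hinj, hcard]
  have hkey : ∀ q ∈ Qf A, ∃ p, p ∈ Nb A q ∧ s(q, p) ∈ M := by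
    intro q hq
    obtain ⟨e, he, hpe⟩ := Finset.mem_image.1 (himg ▸ hq)
    have hqe : q ∈ e := hpe ▸ (pickQ_spec A (edge_np A hssd hSC hq0 (hM.1.1 e he))).1
    obtain ⟨i, j, rfl, hadj⟩ := hM.1.1 e he
    rw [Sym2.mem_iff] at hqe
    obtain ⟨y, hyadj, hye⟩ : ∃ y, Adjd (DA A) q y ∧ s(i, j) = s(q, y) := by
      rcases hqe with rfl | rfl
      · exact ⟨j, hadj, rfl⟩
      · exact ⟨i, adjd_symm hadj, Sym2.eq_swap⟩
    have hyP : Pendant (DA A) y := by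
      by_contra hyn
      have hyQ : y ∈ Qf A := (mem_Qf A).2 hyn
      rw [← himg] at hyQ
      obtain ⟨e', he', hye'⟩ := Finset.mem_image.1 hyQ
      have hy'e' : y ∈ e' := hye' ▸ (pickQ_spec A (edge_np A hssd hSC hq0 (hM.1.1 e' he'))).1
      have hy'e : y ∈ s(i, j) := by rw [hye]; simp
      by_cases hee : s(i, j) = e'
      · rw [← hee] at hye'
        exact hyadj.1 (hpe.symm.trans hye')
      · exact hM.1.2 _ he _ he' hee y hy'e hy'e'
    refine ⟨y, (mem_Nb A).2 ⟨hyP, (eq_pnb A hyP (adjd_symm hyadj)).symm⟩, ?_⟩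
    rw [← hye]; exact he
  choose p hp1 hp2 using hkey
  have hpi : p ∈ (Qf A).pi (fun q => Nb A q) := Finset.mem_pi.2 hp1
  refine ⟨p, hpi, ?_⟩
  refine (Finset.eq_of_subset_of_card_le ?_ ?_).symm
  · intro e he
    obtain ⟨q, hq, rfl⟩ := (mem_toM A).1 he
    exact hp2 q hq
  · rw [toM_card A hpi, hcard]

lemma delta_eq (hD : InClassD (DA A)) (hssd : IsSSD (DA A)) (hSC : StronglyConnected (DA A))
    (hq0 : ∃ q, ¬ Pendant (DA A) q) :
    Delta A = ∏ q ∈ Qf A, sig A q := by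
  have h1 : (∑ x ∈ (Qf A).pi (fun q => Nb A q),
      ∏ q ∈ (Qf A).attach, (A q.1 (x q.1 q.2) * A (x q.1 q.2) q.1)) = Delta A := by
    rw [Delta]
    apply Finset.sum_bij (fun x _ => toM A x)
    · intro x hx
      rw [maxMatchings, Set.Finite.mem_toFinset]
      exact toM_isMax A hssd hSC hq0 hx
    · intro x hx y hy hxy
      funext q hq
      have : s(q, x q hq) ∈ toM A y := by rw [← hxy, mem_toM]; exact ⟨q, hq, rfl⟩
      obtain ⟨q', hq', heq⟩ := (mem_toM A).1 this
      rcases Sym2.eq_iff.1 heq with ⟨h1, h2⟩ | ⟨h1, h2⟩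
      · subst h1; exact h2
      · exfalso
        have := (pi_mem A hy hq').1
        rw [← h1] at this
        exact (mem_Qf A).1 hq this
    · intro M hM
      rw [maxMatchings, Set.Finite.mem_toFinset] at hM
      obtain ⟨x, hx, rfl⟩ := max_eq_toM A hD hssd hSC hq0 hM
      exact ⟨x, hx, rfl⟩
    · intro x hx
      rw [matchProd, toM, Finset.prod_image ?_]
      · apply Finset.prod_congr rfl
        intro q _
        rw [cycProd, Sym2.lift_mk]
      · intro a ha b hb hab
        exact toM_injOn A hx ha hb hab
  rw [← h1]
  exact (Finset.prod_sum (Qf A) (fun q => Nb A q) (fun q p => A q p * A p q)).symm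

lemma sig_nonzero (hD : InClassD (DA A)) (hssd : IsSSD (DA A)) (hSC : StronglyConnected (DA A))
    (hq0 : ∃ q, ¬ Pendant (DA A) q) (hΔ : Delta A ≠ 0) :
    ∀ q, ¬ Pendant (DA A) q → sig A q ≠ 0 := by
  rw [delta_eq A hD hssd hSC hq0] at hΔ
  intro q hq
  exact Finset.prod_ne_zero_iff.1 hΔ q ((mem_Qf A).2 hq)

end CorAux
namespace CorAux

open Finset
open scoped Classical

variable {n : ℕ} (A : Matrix (Fin n) (Fin n) ℝ)

/-! ### Uniqueness of the group inverse -/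

lemma gi_unique (X Y : Matrix (Fin n) (Fin n) ℝ) (hX : IsGroupInverse A X)
    (hY : IsGroupInverse A Y) : X = Y := by
  obtain ⟨hX1, hX2, hX3⟩ := hX
  obtain ⟨hY1, hY2, hY3⟩ := hY
  have hE : A * X = A * Y := by
    have k1 : A * X * (A * Y) = A * Y := by
      calc A * X * (A * Y) = A * X * A * Y := (Matrix.mul_assoc (A * X) A Y).symm
        _ = A * Y := by rw [hX1]
    have k2 : X * A * (Y * A) = X * A := by
      calc X * A * (Y * A) = X * (A * (Y * A)) := Matrix.mul_assoc _ _ _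
        _ = X * (A * Y * A) := by rw [Matrix.mul_assoc A Y A]
        _ = X * A := by rw [hY1]
    have k3 : A * X * (A * Y) = X * A * (Y * A) := by rw [hX3, hY3]
    calc A * X = X * A := hX3
      _ = A * X * (A * Y) := by rw [k3, k2]
      _ = A * Y := k1
  calc X = X * A * X := hX2.symm
    _ = X * (A * X) := Matrix.mul_assoc _ _ _
    _ = X * (A * Y) := by rw [hE]
    _ = X * A * Y := (Matrix.mul_assoc _ _ _).symm
    _ = A * X * Y := by rw [← hX3]
    _ = A * Y * Y := by rw [hE]
    _ = Y * A * Y := by rw [hY3]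
    _ = Y := hY2

/-! ### Conclusions for `X0` -/

section Conclusions

variable (hD : InClassD (DA A)) (hssd : IsSSD (DA A)) (hSC : StronglyConnected (DA A))
  (hq0 : ∃ q, ¬ Pendant (DA A) q) (hsig : ∀ q, ¬ Pendant (DA A) q → sig A q ≠ 0)

include hssd hSC hq0 hsig

lemma X0_diag (i : Fin n) : X0 A i i = 0 := by
  by_cases hi : Pendant (DA A) i
  · rw [X0_pp A hi hi, diag_zero A hssd]; ring
  · rw [X0_qq A hi hi]

lemma X0_pp_zero_iff {i j : Fin n} (hi : Pendant (DA A) i) (hj : Pendant (DA A) j) :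
    X0 A i j = 0 ↔ A (pnb A i) (pnb A j) = 0 := by
  rw [X0_pp A hi hj, neg_eq_zero]
  have h1 : A i (pnb A i) ≠ 0 := pnb_ne A hi
  have h2 : A (pnb A j) j ≠ 0 := pnb_ne' A hj
  have h3 : (sig A (pnb A i))⁻¹ ≠ 0 := inv_ne_zero (hsig _ (pnb_np A hssd hSC hq0 hi))
  have h4 : (sig A (pnb A j))⁻¹ ≠ 0 := inv_ne_zero (hsig _ (pnb_np A hssd hSC hq0 hj))
  simp [mul_eq_zero, h1, h2, h3, h4]

lemma X0_symm_iff (i j : Fin n) : X0 A i j ≠ 0 ↔ X0 A j i ≠ 0 := by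
  by_cases hi : Pendant (DA A) i <;> by_cases hj : Pendant (DA A) j
  · simp only [ne_eq, X0_pp_zero_iff A hssd hSC hq0 hsig hi hj,
      X0_pp_zero_iff A hssd hSC hq0 hsig hj hi]
    exact ⟨fun h hz => a_symm A hssd h hz, fun h hz => a_symm A hssd h hz⟩
  · rw [X0_pq A hi hj, X0_qp A hj hi]
    have hs : (sig A j)⁻¹ ≠ 0 := inv_ne_zero (hsig j hj)
    rw [mul_ne_zero_iff, mul_ne_zero_iff]
    exact ⟨fun h => ⟨hs, a_symm A hssd h.1⟩, fun h => ⟨a_symm A hssd h.2, hs⟩⟩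
  · rw [X0_qp A hi hj, X0_pq A hj hi]
    have hs : (sig A i)⁻¹ ≠ 0 := inv_ne_zero (hsig i hi)
    rw [mul_ne_zero_iff, mul_ne_zero_iff]
    exact ⟨fun h => ⟨a_symm A hssd h.2, hs⟩, fun h => ⟨hs, a_symm A hssd h.1⟩⟩
  · rw [X0_qq A hi hj, X0_qq A hj hi]

include hD in
lemma X0_step {i j : Fin n} (h : A i j ≠ 0) :
    Relation.ReflTransGen (DA (X0 A)) i j := by
  by_cases hi : Pendant (DA A) i <;> by_cases hj : Pendant (DA A) j
  · exact absurd (no_pp A hssd hSC hq0 hi hj) h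
  · refine Relation.ReflTransGen.single ?_
    show X0 A i j ≠ 0
    rw [X0_pq A hi hj]
    exact mul_ne_zero h (inv_ne_zero (hsig j hj))
  · refine Relation.ReflTransGen.single ?_
    show X0 A i j ≠ 0
    rw [X0_qp A hi hj]
    exact mul_ne_zero (inv_ne_zero (hsig i hi)) h
  · obtain ⟨pi', hpi⟩ := nb_nonempty A hD hi
    obtain ⟨pj', hpj⟩ := nb_nonempty A hD hj
    rw [mem_Nb] at hpi hpj
    have e1 : DA (X0 A) i pi' := by
      show X0 A i pi' ≠ 0
      rw [X0_qp A hi hpi.1]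
      refine mul_ne_zero (inv_ne_zero (hsig i hi)) ?_
      rw [pendant_col A hssd hpi.1]
      exact hpi.2.symm
    have e2 : DA (X0 A) pi' pj' := by
      show X0 A pi' pj' ≠ 0
      rw [Ne, X0_pp_zero_iff A hssd hSC hq0 hsig hpi.1 hpj.1, hpi.2, hpj.2]
      exact h
    have e3 : DA (X0 A) pj' j := by
      show X0 A pj' j ≠ 0
      rw [X0_pq A hpj.1 hj]
      refine mul_ne_zero ?_ (inv_ne_zero (hsig j hj))
      rw [pendant_row A hssd hpj.1]
      exact hpj.2.symm
    exact ((Relation.ReflTransGen.single e1).tail e2).tail e3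

include hD in
lemma X0_sc : StronglyConnected (DA (X0 A)) := by
  intro i j
  have h := hSC i j
  induction h with
  | refl => exact Relation.ReflTransGen.refl
  | tail _ hbc ih => exact ih.trans (X0_step A hD hssd hSC hq0 hsig hbc)

end Conclusions

/-! ### The case where every vertex is pendant -/

lemma all_pendant_case (hssd : IsSSD (DA A)) (hSC : StronglyConnected (DA A))
    (hall : ∀ q, Pendant (DA A) q) (X : Matrix (Fin n) (Fin n) ℝ)
    (hX : IsGroupInverse A X) :
    StronglyConnected (DA X) ∧ IsSSD (DA X) ∧ (∀ i, X i i = 0) ∧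
      ∀ i j, X i j ≠ 0 ↔ X j i ≠ 0 := by
  rcases isEmpty_or_nonempty (Fin n) with hE | hNE
  · exact ⟨fun i _ => isEmptyElim i, ⟨fun i => isEmptyElim i, fun i _ => isEmptyElim i⟩,
      fun i => isEmptyElim i, fun i _ => isEmptyElim i⟩
  · obtain ⟨v⟩ := hNE
    have hv := hall v
    have hadj := adj_pnb A hv
    set u := pnb A v with hu
    have hvu : v ≠ u := hadj.1
    have hall2 : ∀ x, x = v ∨ x = u := fun x => reach_pair A hssd hv (hall u) hadj (hSC v x)
    have ha : A v u ≠ 0 := hadj.2.1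
    have hb : A u v ≠ 0 := hadj.2.2
    have hAvv : A v v = 0 := diag_zero A hssd v
    have hAuu : A u u = 0 := diag_zero A hssd u
    set Y : Matrix (Fin n) (Fin n) ℝ := Matrix.of (fun i j =>
      if i = v ∧ j = u then (A u v)⁻¹ else if i = u ∧ j = v then (A v u)⁻¹ else 0) with hYdef
    have hYvu : Y v u = (A u v)⁻¹ := by simp [hYdef]
    have hYuv : Y u v = (A v u)⁻¹ := by simp [hYdef, hvu, Ne.symm hvu]
    have hYvv : Y v v = 0 := by simp [hYdef, hvu, Ne.symm hvu]
    have hYuu : Y u u = 0 := by simp [hYdef, hvu, Ne.symm hvu]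
    have hAY : A * Y = 1 := by
      ext i j
      rw [Matrix.mul_apply]
      rcases hall2 i with rfl | rfl
      · rw [Finset.sum_eq_single u]
        · rcases hall2 j with rfl | rfl
          · rw [hYuv, Matrix.one_apply_eq]
            exact mul_inv_cancel₀ ha
          · rw [hYuu, mul_zero, Matrix.one_apply_ne hvu]
        · intro k _ hk
          rcases hall2 k with rfl | rfl
          · rw [hAvv, zero_mul]
          · exact absurd rfl hk
        · intro h; exact absurd (Finset.mem_univ _) h
      · rw [Finset.sum_eq_single v]
        · rcases hall2 j with rfl | rfl
          · rw [hYvv, mul_zero, Matrix.one_apply_ne (Ne.symm hvu)]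
          · rw [hYvu, Matrix.one_apply_eq]
            exact mul_inv_cancel₀ hb
        · intro k _ hk
          rcases hall2 k with rfl | rfl
          · exact absurd rfl hk
          · rw [hAuu, zero_mul]
        · intro h; exact absurd (Finset.mem_univ _) h
    have hYA : Y * A = 1 := by
      ext i j
      rw [Matrix.mul_apply]
      rcases hall2 i with rfl | rfl
      · rw [Finset.sum_eq_single u]
        · rcases hall2 j with rfl | rfl
          · rw [hYvu, Matrix.one_apply_eq]
            exact inv_mul_cancel₀ hb
          · rw [hAuu, mul_zero, Matrix.one_apply_ne hvu]
        · intro k _ hk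
          rcases hall2 k with rfl | rfl
          · rw [hYvv, zero_mul]
          · exact absurd rfl hk
        · intro h; exact absurd (Finset.mem_univ _) h
      · rw [Finset.sum_eq_single v]
        · rcases hall2 j with rfl | rfl
          · rw [hAvv, mul_zero, Matrix.one_apply_ne (Ne.symm hvu)]
          · rw [hYuv, Matrix.one_apply_eq]
            exact inv_mul_cancel₀ ha
        · intro k _ hk
          rcases hall2 k with rfl | rfl
          · exact absurd rfl hk
          · rw [hYuu, zero_mul]
        · intro h; exact absurd (Finset.mem_univ _) h
    have hXY : X = Y := by
      have e1 : Y * A * X * (A * Y) = X := by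
        rw [hYA, hAY, Matrix.one_mul, Matrix.mul_one]
      have e2 : Y * A * X * (A * Y) = Y * (A * X * A) * Y := by
        simp only [Matrix.mul_assoc]
      rw [← e1, e2, hX.1, hYA, Matrix.one_mul]
    subst hXY
    have hdiag : ∀ i, Y i i = 0 := by
      intro i
      rcases hall2 i with rfl | rfl
      · exact hYvv
      · exact hYuu
    have hsymm : ∀ i j, Y i j ≠ 0 ↔ Y j i ≠ 0 := by
      intro i j
      rcases hall2 i with rfl | rfl <;> rcases hall2 j with rfl | rfl
      · exact Iff.rfl
      · rw [hYvu, hYuv]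
        exact ⟨fun _ => inv_ne_zero ha, fun _ => inv_ne_zero hb⟩
      · rw [hYvu, hYuv]
        exact ⟨fun _ => inv_ne_zero hb, fun _ => inv_ne_zero ha⟩
      · exact Iff.rfl
    refine ⟨?_, ⟨fun i h => h (hdiag i), fun i j h => (hsymm i j).1 h⟩, hdiag, hsymm⟩
    intro i j
    have evu : DA Y v u := by show Y v u ≠ 0; rw [hYvu]; exact inv_ne_zero hb
    have euv : DA Y u v := by show Y u v ≠ 0; rw [hYuv]; exact inv_ne_zero ha
    rcases hall2 i with rfl | rfl <;> rcases hall2 j with rfl | rfl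
    · exact Relation.ReflTransGen.refl
    · exact Relation.ReflTransGen.single evu
    · exact Relation.ReflTransGen.single euv
    · exact Relation.ReflTransGen.refl

end CorAux
/-- Corollary 3.4: for `D(A) ∈ 𝒟` strongly connected with `Δ_A ≠ 0`, the digraph `D(A^#)`
is a strongly connected simple symmetric digraph; in particular `A^#` has zero diagonal and
is combinatorially symmetric. -/
theorem group_inverse_digraph_ssd {n : ℕ} (A : Matrix (Fin n) (Fin n) ℝ)
    (hD : InClassD (DA A)) (hSC : StronglyConnected (DA A)) (hΔ : Delta A ≠ 0) :
    ∀ X, IsGroupInverse A X →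
      StronglyConnected (DA X) ∧ IsSSD (DA X) ∧ (∀ i, X i i = 0) ∧
        ∀ i j, X i j ≠ 0 ↔ X j i ≠ 0 := by
  intro X hX
  have hssd := hD.1
  by_cases hq0 : ∃ q, ¬ Pendant (DA A) q
  · have hsig := CorAux.sig_nonzero A hD hssd hSC hq0 hΔ
    have hgi := CorAux.X0_groupInverse A hssd hSC hq0 hsig
    have hXX : X = CorAux.X0 A := CorAux.gi_unique A X (CorAux.X0 A) hX hgi
    subst hXX
    refine ⟨CorAux.X0_sc A hD hssd hSC hq0 hsig, ?_, CorAux.X0_diag A hssd hSC hq0 hsig,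
      CorAux.X0_symm_iff A hssd hSC hq0 hsig⟩
    exact ⟨fun i h => h (CorAux.X0_diag A hssd hSC hq0 hsig i),
      fun i j h => (CorAux.X0_symm_iff A hssd hSC hq0 hsig i j).1 h⟩
  · push_neg at hq0
    exact CorAux.all_pendant_case A hssd hSC hq0 X hX
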